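/- arXiv:1512.01179 — 2 statements merged into one kernel-verified Lean document; each statement's English description precedes it below -/
import Mathlib

section
/- Let d ≥ 2. For k = (k_1,…,k_d) ∈ {0,1}^d let J_k = ∏_{l=1}^d J_{k_l} ⊆ ℝ^d, where J_0 = (−∞,0) and J_1 = [0,∞). If f ∈ L^∞(ℝ^d) and x ∈ ℝ^d are such that for every k ∈ {0,1}^d the limit f(x,J_k) := lim_{y→0, y∈J_k} f(x−y) exists, then lim_{θ→0⁺} (P_θ^d * f)(x) = 2^{−d} Σ_{k∈{0,1}^d} f(x,J_k). -/
open MeasureTheory Filter Topology Real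

/-- The Poisson kernel on `ℝ`: `P θ t = θ / (π (θ² + t²))`. -/
noncomputable def poissonKernelLine (θ t : ℝ) : ℝ := θ / (π * (θ ^ 2 + t ^ 2))

/-- The product Poisson kernel on `ℝ^d`: `P_θ^d(x) = ∏_j P_θ(x_j)`. -/
noncomputable def poissonKernelPi (d : ℕ) (θ : ℝ) (x : Fin d → ℝ) : ℝ :=
  ∏ j, poissonKernelLine θ (x j)

/-- The two half-lines `J_0 = (-∞,0)` and `J_1 = [0,∞)`. -/
def halfLine : Fin 2 → Set ℝ := ![Set.Iio 0, Set.Ici 0]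

/-- The orthant `J_k = ∏_l J_{k_l} ⊆ ℝ^d` for `k ∈ {0,1}^d`. -/
def orthant (d : ℕ) (k : Fin d → Fin 2) : Set (Fin d → ℝ) :=
  {y | ∀ j, y j ∈ halfLine (k j)}

open Set ENNReal

section AuxPoisson




lemma pk_nonneg {θ : ℝ} (hθ : 0 < θ) (t : ℝ) : 0 ≤ poissonKernelLine θ t := by
  apply div_nonneg hθ.le
  positivity

lemma pk_neg (θ t : ℝ) : poissonKernelLine θ (-t) = poissonKernelLine θ t := by
  simp [poissonKernelLine]

lemma pk_eq {θ : ℝ} (hθ : 0 < θ) (t : ℝ) :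
    poissonKernelLine θ t = (π * θ)⁻¹ * (1 + (t / θ) ^ 2)⁻¹ := by
  have h1 : θ ^ 2 + t ^ 2 > 0 := by positivity
  have hπ := pi_pos
  unfold poissonKernelLine
  field_simp

lemma pk_integrable {θ : ℝ} (hθ : 0 < θ) : Integrable (poissonKernelLine θ) := by
  have : Integrable (fun t : ℝ => (π * θ)⁻¹ * (1 + (t / θ) ^ 2)⁻¹) :=
    (integrable_inv_one_add_sq.comp_div hθ.ne').const_mul _
  exact this.congr (Filter.Eventually.of_forall fun t => (pk_eq hθ t).symm)

lemma pk_integral {θ : ℝ} (hθ : 0 < θ) : ∫ t, poissonKernelLine θ t = 1 := by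
  have h : (fun t : ℝ => poissonKernelLine θ t) =
      fun t : ℝ => (π * θ)⁻¹ * (1 + (t / θ) ^ 2)⁻¹ := funext fun t => pk_eq hθ t
  rw [h, MeasureTheory.integral_const_mul,
    MeasureTheory.Measure.integral_comp_div (fun x : ℝ => (1 + x ^ 2)⁻¹) θ,
    integral_univ_inv_one_add_sq]
  rw [abs_of_pos hθ]
  simp
  field_simp


lemma halfLine_measurable (i : Fin 2) : MeasurableSet (halfLine i) := by
  fin_cases i
  · exact measurableSet_Iio
  · exact measurableSet_Ici

lemma pk_Iic_eq_Ioi {θ : ℝ} (c : ℝ) :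
    ∫ t in Set.Iic (-c), poissonKernelLine θ t = ∫ t in Set.Ioi c, poissonKernelLine θ t := by
  rw [← integral_comp_neg_Ioi]
  simp_rw [pk_neg]

lemma pk_half {θ : ℝ} (hθ : 0 < θ) (i : Fin 2) :
    ∫ t in halfLine i, poissonKernelLine θ t = 2⁻¹ := by
  have hIic : ∫ t in Set.Iic (0:ℝ), poissonKernelLine θ t
      = ∫ t in Set.Ioi (0:ℝ), poissonKernelLine θ t := by
    simpa using pk_Iic_eq_Ioi (θ := θ) 0
  have hsum := intervalIntegral.integral_Iic_add_Ioi (b := (0:ℝ))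
    (pk_integrable hθ).integrableOn (pk_integrable hθ).integrableOn
  rw [pk_integral hθ] at hsum
  have hIoi : ∫ t in Set.Ioi (0:ℝ), poissonKernelLine θ t = 2⁻¹ := by linarith
  fin_cases i
  · show ∫ t in Set.Iio (0:ℝ), poissonKernelLine θ t = 2⁻¹
    rw [setIntegral_congr_set Iio_ae_eq_Iic, hIic, hIoi]
  · show ∫ t in Set.Ici (0:ℝ), poissonKernelLine θ t = 2⁻¹
    rw [← setIntegral_congr_set Ioi_ae_eq_Ici, hIoi]

lemma pk_tail_Ioi {θ δ : ℝ} (hθ : 0 < θ) (hδ : 0 < δ) :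
    ∫ t in Set.Ioi δ, poissonKernelLine θ t ≤ θ / (π * δ) := by
  have hint : IntegrableOn (fun t : ℝ => (θ / π) * t ^ (-2 : ℝ)) (Set.Ioi δ) :=
    (integrableOn_Ioi_rpow_of_lt (by norm_num) hδ).const_mul _
  have hle : ∫ t in Set.Ioi δ, poissonKernelLine θ t
      ≤ ∫ t in Set.Ioi δ, (θ / π) * t ^ (-2 : ℝ) := by
    apply setIntegral_mono_on (pk_integrable hθ).integrableOn hint measurableSet_Ioi
    intro t ht
    have ht0 : 0 < t := hδ.trans ht
    have h1 : t ^ (-2 : ℝ) = (t ^ 2)⁻¹ := by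
      rw [Real.rpow_neg ht0.le, ← Real.rpow_natCast t 2]
      norm_num
    rw [h1, poissonKernelLine]
    have heq : θ / π * (t ^ 2)⁻¹ = θ / (π * t ^ 2) := by
      rw [division_def, division_def, mul_inv, mul_assoc]
    rw [heq]
    gcongr
    · nlinarith
  rw [MeasureTheory.integral_const_mul, integral_Ioi_rpow_of_lt (by norm_num) hδ] at hle
  calc ∫ t in Set.Ioi δ, poissonKernelLine θ t ≤ θ / π * (-δ ^ (-2 + 1 : ℝ) / (-2 + 1)) := hle
    _ = θ / (π * δ) := by
        norm_num
        rw [Real.rpow_neg_one]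
        field_simp

lemma tailSet_eq (δ : ℝ) : {t : ℝ | δ ≤ |t|} = Set.Iic (-δ) ∪ Set.Ici δ := by
  ext t
  simp only [Set.mem_setOf_eq, Set.mem_union, Set.mem_Iic, Set.mem_Ici, le_abs]
  constructor
  · rintro (h | h)
    · right; exact h
    · left; linarith
  · rintro (h | h)
    · right; linarith
    · left; exact h

lemma tailSet_measurable (δ : ℝ) : MeasurableSet {t : ℝ | δ ≤ |t|} := by
  rw [tailSet_eq]
  exact measurableSet_Iic.union measurableSet_Ici

lemma pk_tail {θ δ : ℝ} (hθ : 0 < θ) (hδ : 0 < δ) :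
    ∫ t in {t : ℝ | δ ≤ |t|}, poissonKernelLine θ t ≤ 2 * θ / (π * δ) := by
  rw [tailSet_eq]
  rw [setIntegral_union (by
      apply Set.disjoint_left.2
      intro a ha ha'
      simp only [Set.mem_Iic, Set.mem_Ici] at ha ha'
      linarith) measurableSet_Ici (pk_integrable hθ).integrableOn
      (pk_integrable hθ).integrableOn]
  have h1 : ∫ t in Set.Iic (-δ), poissonKernelLine θ t ≤ θ / (π * δ) := by
    rw [pk_Iic_eq_Ioi]
    exact pk_tail_Ioi hθ hδ
  have h2 : ∫ t in Set.Ici δ, poissonKernelLine θ t ≤ θ / (π * δ) := by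
    rw [← setIntegral_congr_set Ioi_ae_eq_Ici]
    exact pk_tail_Ioi hθ hδ
  calc _ ≤ θ / (π * δ) + θ / (π * δ) := add_le_add h1 h2
    _ = 2 * θ / (π * δ) := by ring


lemma indicator_pi_prod {d : ℕ} (g : ℝ → ℝ) (s : Fin d → Set ℝ) (y : Fin d → ℝ) :
    (Set.univ.pi s).indicator (fun y : Fin d → ℝ => ∏ j, g (y j)) y
      = ∏ j, (s j).indicator g (y j) := by
  by_cases hy : y ∈ Set.univ.pi s
  · rw [Set.indicator_of_mem hy]
    exact Finset.prod_congr rfl fun j _ =>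
      (Set.indicator_of_mem (hy j (Set.mem_univ j)) g).symm
  · rw [Set.indicator_of_notMem hy]
    rw [Set.mem_pi] at hy
    push_neg at hy
    obtain ⟨j, -, hj⟩ := hy
    exact (Finset.prod_eq_zero (Finset.mem_univ j) (Set.indicator_of_notMem hj g)).symm

lemma integral_pi_prod {d : ℕ} (g : ℝ → ℝ) (s : Fin d → Set ℝ)
    (hs : ∀ j, MeasurableSet (s j)) :
    ∫ y in Set.univ.pi s, ∏ j, g (y j) = ∏ j, ∫ t in s j, g t := by
  rw [← MeasureTheory.integral_indicator (MeasurableSet.univ_pi hs)]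
  simp_rw [indicator_pi_prod g s]
  rw [MeasureTheory.volume_pi, MeasureTheory.integral_fintype_prod_eq_prod (fun j t => (s j).indicator g t)]
  exact Finset.prod_congr rfl fun j _ => MeasureTheory.integral_indicator (hs j)

variable {d : ℕ}

lemma orthant_eq_pi (k : Fin d → Fin 2) :
    orthant d k = Set.univ.pi (fun j => halfLine (k j)) := by
  ext y
  simp [orthant, Set.mem_pi]

lemma orthant_measurable (k : Fin d → Fin 2) : MeasurableSet (orthant d k) := by
  rw [orthant_eq_pi]
  exact MeasurableSet.univ_pi fun j => halfLine_measurable (k j)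

lemma Q_nonneg {θ : ℝ} (hθ : 0 < θ) (y : Fin d → ℝ) : 0 ≤ poissonKernelPi d θ y :=
  Finset.prod_nonneg fun j _ => pk_nonneg hθ _

lemma Q_integrable {θ : ℝ} (hθ : 0 < θ) : Integrable (poissonKernelPi d θ) :=
  Integrable.fintype_prod (𝕜 := ℝ) fun _ => pk_integrable hθ

lemma Q_integral {θ : ℝ} (hθ : 0 < θ) : ∫ y : Fin d → ℝ, poissonKernelPi d θ y = 1 := by
  have := integral_pi_prod (d := d) (poissonKernelLine θ) (fun _ => Set.univ)
    (fun _ => MeasurableSet.univ)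
  simp only [Set.pi_univ, Measure.restrict_univ] at this
  rw [show (∫ y : Fin d → ℝ, poissonKernelPi d θ y)
    = ∫ y : Fin d → ℝ, ∏ j, poissonKernelLine θ (y j) from rfl, this]
  simp [pk_integral hθ]

lemma Q_orthant_integral {θ : ℝ} (hθ : 0 < θ) (k : Fin d → Fin 2) :
    ∫ y in orthant d k, poissonKernelPi d θ y = (2⁻¹ : ℝ) ^ d := by
  rw [orthant_eq_pi]
  rw [show (fun y : Fin d → ℝ => poissonKernelPi d θ y)
    = fun y : Fin d → ℝ => ∏ j, poissonKernelLine θ (y j) from rfl]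
  rw [integral_pi_prod (poissonKernelLine θ) _ (fun j => halfLine_measurable (k j))]
  simp [pk_half hθ]

lemma Q_slab_integral {θ δ : ℝ} (hθ : 0 < θ) (hδ : 0 < δ) (j : Fin d) :
    ∫ y in {y : Fin d → ℝ | δ ≤ |y j|}, poissonKernelPi d θ y ≤ 2 * θ / (π * δ) := by
  classical
  have hset : {y : Fin d → ℝ | δ ≤ |y j|}
      = Set.univ.pi (fun l => if l = j then {t : ℝ | δ ≤ |t|} else Set.univ) := by
    ext y
    simp only [Set.mem_setOf_eq, Set.mem_pi, Set.mem_univ, forall_true_left]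
    constructor
    · intro h l
      by_cases hl : l = j
      · subst hl; simp [h]
      · simp [hl]
    · intro h
      have := h j
      simpa using this
  rw [hset]
  rw [show (fun y : Fin d → ℝ => poissonKernelPi d θ y)
    = fun y : Fin d → ℝ => ∏ l, poissonKernelLine θ (y l) from rfl]
  rw [integral_pi_prod (poissonKernelLine θ) _ (fun l => by
    by_cases hl : l = j
    · rw [if_pos hl]; exact tailSet_measurable δ
    · rw [if_neg hl]; exact MeasurableSet.univ)]
  have heval : ∀ l : Fin d, (∫ t in (if l = j then {t : ℝ | δ ≤ |t|} else Set.univ),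
      poissonKernelLine θ t) = if l = j then ∫ t in {t : ℝ | δ ≤ |t|}, poissonKernelLine θ t else 1 := by
    intro l
    by_cases hl : l = j <;> simp [hl, pk_integral hθ]
  simp_rw [heval]
  rw [Finset.prod_ite_eq' Finset.univ j
    (fun _ => ∫ t in {t : ℝ | δ ≤ |t|}, poissonKernelLine θ t)]
  simp only [Finset.mem_univ, if_true]
  exact pk_tail hθ hδ

lemma Q_tail {θ δ : ℝ} (hθ : 0 < θ) (hδ : 0 < δ) :
    ∫ y in {y : Fin d → ℝ | δ ≤ ‖y‖}, poissonKernelPi d θ y ≤ d * (2 * θ / (π * δ)) := by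
  classical
  set Q := poissonKernelPi d θ with hQ
  set T : Set (Fin d → ℝ) := {y | δ ≤ ‖y‖} with hT
  set S : Fin d → Set (Fin d → ℝ) := fun j => {y | δ ≤ |y j|} with hS
  have hTm : MeasurableSet T := measurableSet_le measurable_const measurable_norm
  have hSm : ∀ j, MeasurableSet (S j) :=
    fun j => measurableSet_le measurable_const (measurable_pi_apply j).abs
  have key : ∫ y in T, Q y ≤ ∑ j, ∫ y in S j, Q y := by
    rw [← MeasureTheory.integral_indicator hTm]
    have h2 : ∀ j, ∫ y in S j, Q y = ∫ y, (S j).indicator Q y :=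
      fun j => (MeasureTheory.integral_indicator (hSm j)).symm
    simp_rw [h2]
    rw [← integral_finset_sum]
    · apply integral_mono ((Q_integrable hθ).indicator hTm)
        (integrable_finset_sum _ fun j _ => (Q_integrable hθ).indicator (hSm j))
      intro y
      by_cases hy : y ∈ T
      · rw [Set.indicator_of_mem hy]
        have hex : ∃ j, y ∈ S j := by
          by_contra hcon
          push_neg at hcon
          simp only [hS, Set.mem_setOf_eq, not_le] at hcon
          have : ‖y‖ < δ := by
            rw [pi_norm_lt_iff hδ]
            intro i
            rw [Real.norm_eq_abs]
            exact hcon i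
          exact absurd hy (by simp [hT, not_le, this])
        obtain ⟨j, hj⟩ := hex
        calc Q y = (S j).indicator Q y := (Set.indicator_of_mem hj Q).symm
          _ ≤ ∑ l, (S l).indicator Q y := Finset.single_le_sum
              (fun l _ => Set.indicator_nonneg (fun z _ => Q_nonneg hθ z) y) (Finset.mem_univ j)
      · rw [Set.indicator_of_notMem hy]
        exact Finset.sum_nonneg fun l _ =>
          Set.indicator_nonneg (fun z _ => Q_nonneg hθ z) y
    · exact fun j _ => (Q_integrable hθ).indicator (hSm j)
  calc ∫ y in T, Q y ≤ ∑ j, ∫ y in S j, Q y := key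
    _ ≤ ∑ _j : Fin d, 2 * θ / (π * δ) :=
        Finset.sum_le_sum fun j _ => Q_slab_integral hθ hδ j
    _ = d * (2 * θ / (π * δ)) := by simp [mul_comm]

lemma halfLine_eq {i i' : Fin 2} {t : ℝ} (h : t ∈ halfLine i) (h' : t ∈ halfLine i') :
    i = i' := by
  fin_cases i <;> fin_cases i' <;> simp_all [halfLine] <;> linarith

lemma orthant_disjoint : Pairwise (Function.onFun Disjoint (orthant d)) := by
  intro k k' hkk'
  rw [Function.onFun, Set.disjoint_left]
  intro y hy hy'
  exact hkk' (funext fun j => halfLine_eq (hy j) (hy' j))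

lemma orthant_union : ⋃ k : Fin d → Fin 2, orthant d k = Set.univ := by
  ext y
  simp only [Set.mem_iUnion, Set.mem_univ, iff_true]
  refine ⟨fun j => if 0 ≤ y j then 1 else 0, fun j => ?_⟩
  by_cases h : 0 ≤ y j
  · simpa [halfLine, h] using h
  · simp only [h, if_false]
    simpa [halfLine] using lt_of_not_ge h

lemma integral_orthant_sum (F : (Fin d → ℝ) → ℂ) (hF : Integrable F) :
    ∫ y, F y = ∑ k : Fin d → Fin 2, ∫ y in orthant d k, F y := by
  rw [← setIntegral_univ, ← orthant_union]
  exact integral_iUnion_fintype (fun k => orthant_measurable k) orthant_disjoint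
    (fun k => hF.integrableOn)


lemma key_orthant (hd : 0 < d) {f : (Fin d → ℝ) → ℂ} (hf : MemLp f ⊤ volume)
    (x : Fin d → ℝ) (k : Fin d → Fin 2) {l : ℂ}
    (hL : Tendsto (fun y => f (x - y)) (𝓝[orthant d k] 0) (𝓝 l)) :
    Tendsto (fun θ : ℝ => ∫ y in orthant d k, (poissonKernelPi d θ y : ℂ) * f (x - y))
      (𝓝[>] 0) (𝓝 (((2 : ℝ)⁻¹ ^ d) • l)) := by
  classical
  set g : (Fin d → ℝ) → ℂ := fun y => f (x - y) with hgdef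
  have hg : MemLp g ⊤ volume :=
    hf.comp_measurePreserving (Measure.measurePreserving_sub_left volume x)
  set J := orthant d k with hJ
  have hJm : MeasurableSet J := orthant_measurable k
  set C : ℝ := (eLpNormEssSup g volume).toReal with hCdef
  have hfin : eLpNormEssSup g volume ≠ ⊤ := by
    have := hg.2
    rwa [eLpNorm_exponent_top, lt_top_iff_ne_top] at this
  have hC : ∀ᵐ y : Fin d → ℝ, ‖g y‖ ≤ C := by
    filter_upwards [ae_le_eLpNormEssSup (f := g) (μ := volume)] with y hy
    have : ((‖g y‖₊ : ℝ≥0∞)).toReal ≤ C := ENNReal.toReal_mono hfin hy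
    simpa using this
  have hC0 : 0 ≤ C := ENNReal.toReal_nonneg
  set M : ℝ := C + ‖l‖ + 1 with hMdef
  have hM0 : 0 < M := by positivity
  have hgsm : AEStronglyMeasurable g volume := hg.1
  have hesssup : essSup (fun y => (‖g y‖₊ : ℝ≥0∞)) volume ≠ ⊤ := hfin
  -- integrability
  have intg : ∀ {θ : ℝ}, 0 < θ → Integrable (fun y => poissonKernelPi d θ y • g y) :=
    fun {θ} hθ => (Q_integrable hθ).smul_essSup hgsm hesssup
  have inth : ∀ {θ : ℝ}, 0 < θ →
      Integrable (fun y => poissonKernelPi d θ y • (g y - l)) := by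
    intro θ hθ
    have : (fun y => poissonKernelPi d θ y • (g y - l))
        = fun y => poissonKernelPi d θ y • g y - poissonKernelPi d θ y • l :=
      funext fun y => smul_sub _ _ _
    rw [this]
    exact (intg hθ).sub ((Q_integrable hθ).smul_const l)
  -- the error term tends to zero
  have hE : Tendsto (fun θ : ℝ => ∫ y in J, poissonKernelPi d θ y • (g y - l))
      (𝓝[>] 0) (𝓝 0) := by
    rw [NormedAddCommGroup.tendsto_nhds_zero]
    intro ε hε
    obtain ⟨δ, hδ0, hδ⟩ := Metric.tendsto_nhdsWithin_nhds.mp hL (ε / 2) (half_pos hε)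
    set θ₀ : ℝ := ε * π * δ / (8 * M * d) with hθ₀def
    have hθ₀ : 0 < θ₀ := by
      have : (0:ℝ) < d := Nat.cast_pos.mpr hd
      positivity
    filter_upwards [Ioo_mem_nhdsGT_of_mem (Set.mem_Ico.mpr ⟨le_refl 0, hθ₀⟩)] with θ hθmem
    obtain ⟨hθ0, hθθ₀⟩ := hθmem
    set Q := poissonKernelPi d θ with hQdef
    set h : (Fin d → ℝ) → ℂ := fun y => Q y • (g y - l) with hhdef
    have hsplit : ∫ y in J, h y
        = (∫ y in J ∩ Metric.ball 0 δ, h y) + ∫ y in J \ Metric.ball 0 δ, h y :=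
      (integral_inter_add_diff Metric.isOpen_ball.measurableSet (inth hθ0).integrableOn).symm
    have hQ1 : ∀ s : Set (Fin d → ℝ), ∫ y in s, Q y ≤ 1 := by
      intro s
      rw [← Q_integral hθ0]
      exact setIntegral_le_integral (Q_integrable hθ0)
        (Filter.Eventually.of_forall fun y => Q_nonneg hθ0 y)
    -- near part
    have hnear : ‖∫ y in J ∩ Metric.ball 0 δ, h y‖ ≤ ε / 2 := by
      refine (norm_integral_le_integral_norm _).trans ?_
      have hb : ∫ y in J ∩ Metric.ball 0 δ, ‖h y‖
          ≤ ∫ y in J ∩ Metric.ball 0 δ, Q y * (ε / 2) := by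
        apply setIntegral_mono_on (inth hθ0).norm.integrableOn
          (((Q_integrable hθ0).mul_const (ε / 2)).integrableOn)
          (hJm.inter Metric.isOpen_ball.measurableSet)
        intro y hy
        obtain ⟨hyJ, hyb⟩ := hy
        have hdist : dist (g y) l < ε / 2 := by
          apply hδ hyJ
          simpa [dist_zero_right] using (mem_ball_zero_iff.mp hyb)
        have : ‖h y‖ = Q y * ‖g y - l‖ := by
          rw [hhdef]
          simp only [norm_smul, Real.norm_eq_abs, abs_of_nonneg (Q_nonneg hθ0 y)]
          exact congrArg (· * ‖g y - l‖) (abs_of_nonneg (Q_nonneg hθ0 y))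
        rw [this]
        have hd2 : ‖g y - l‖ ≤ ε / 2 := by rw [← dist_eq_norm]; exact hdist.le
        exact mul_le_mul_of_nonneg_left hd2 (Q_nonneg hθ0 y)
      refine hb.trans ?_
      rw [MeasureTheory.integral_mul_const]
      calc (∫ y in J ∩ Metric.ball 0 δ, Q y) * (ε/2) ≤ 1 * (ε/2) :=
            mul_le_mul_of_nonneg_right (hQ1 _) (by linarith)
        _ = ε / 2 := one_mul _
    -- far part
    have hfar : ‖∫ y in J \ Metric.ball 0 δ, h y‖ ≤ ε / 4 := by
      refine (norm_integral_le_integral_norm _).trans ?_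
      have hb : ∫ y in J \ Metric.ball 0 δ, ‖h y‖
          ≤ ∫ y in J \ Metric.ball 0 δ, Q y * M := by
        apply integral_mono_ae (inth hθ0).norm.integrableOn
          (((Q_integrable hθ0).mul_const M).integrableOn)
        filter_upwards [ae_restrict_of_ae hC] with y hy
        have : ‖h y‖ = Q y * ‖g y - l‖ := by
          rw [hhdef]
          simp only [norm_smul, Real.norm_eq_abs, abs_of_nonneg (Q_nonneg hθ0 y)]
          exact congrArg (· * ‖g y - l‖) (abs_of_nonneg (Q_nonneg hθ0 y))
        rw [this]
        apply mul_le_mul_of_nonneg_left _ (Q_nonneg hθ0 y)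
        calc ‖g y - l‖ ≤ ‖g y‖ + ‖l‖ := norm_sub_le _ _
          _ ≤ C + ‖l‖ := by linarith
          _ ≤ M := by rw [hMdef]; linarith
      refine hb.trans ?_
      rw [MeasureTheory.integral_mul_const]
      have hsub : ∫ y in J \ Metric.ball 0 δ, Q y
          ≤ ∫ y in {y : Fin d → ℝ | δ ≤ ‖y‖}, Q y := by
        apply setIntegral_mono_set ((Q_integrable hθ0).integrableOn)
          (Filter.Eventually.of_forall fun y => Q_nonneg hθ0 y)
        apply HasSubset.Subset.eventuallyLE
        intro y hy
        have : ¬ (‖y‖ < δ) := by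
          intro hcon
          exact hy.2 (mem_ball_zero_iff.mpr hcon)
        exact le_of_not_gt this
      have htail := Q_tail (d := d) hθ0 hδ0
      have hbound : M * ((d : ℝ) * (2 * θ / (π * δ))) ≤ ε / 4 := by
        have hd' : (0:ℝ) < d := Nat.cast_pos.mpr hd
        have hπ := pi_pos
        calc M * ((d:ℝ) * (2 * θ / (π * δ))) = (2 * M * d / (π * δ)) * θ := by ring
          _ ≤ (2 * M * d / (π * δ)) * θ₀ :=
              mul_le_mul_of_nonneg_left hθθ₀.le (by positivity)
          _ = ε / 4 := by rw [hθ₀def]; field_simp; ring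
      calc (∫ y in J \ Metric.ball 0 δ, Q y) * M
          ≤ (∫ y in {y : Fin d → ℝ | δ ≤ ‖y‖}, Q y) * M :=
            mul_le_mul_of_nonneg_right hsub hM0.le
        _ ≤ ((d : ℝ) * (2 * θ / (π * δ))) * M :=
            mul_le_mul_of_nonneg_right (Q_tail hθ0 hδ0) hM0.le
        _ = M * ((d : ℝ) * (2 * θ / (π * δ))) := by ring
        _ ≤ ε / 4 := hbound
    rw [hsplit]
    calc ‖(∫ y in J ∩ Metric.ball 0 δ, h y) + ∫ y in J \ Metric.ball 0 δ, h y‖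
        ≤ ‖∫ y in J ∩ Metric.ball 0 δ, h y‖ + ‖∫ y in J \ Metric.ball 0 δ, h y‖ :=
          norm_add_le _ _
      _ ≤ ε / 2 + ε / 4 := add_le_add hnear hfar
      _ < ε := by linarith
  -- assemble
  have heq : ∀ᶠ θ : ℝ in 𝓝[>] 0,
      (∫ y in J, poissonKernelPi d θ y • (g y - l)) + ((2 : ℝ)⁻¹ ^ d) • l
        = ∫ y in J, (poissonKernelPi d θ y : ℂ) * f (x - y) := by
    filter_upwards [self_mem_nhdsWithin] with θ hθ0
    rw [Set.mem_Ioi] at hθ0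
    have h1 : ∀ y, (poissonKernelPi d θ y : ℂ) * f (x - y)
        = poissonKernelPi d θ y • g y := fun y => by
      rw [hgdef]; rw [Complex.real_smul]
    simp_rw [h1]
    have h2 : ∀ y : Fin d → ℝ, poissonKernelPi d θ y • g y
        = poissonKernelPi d θ y • (g y - l) + poissonKernelPi d θ y • l := fun y => by
      rw [smul_sub]; ring
    simp_rw [h2]
    rw [integral_add (inth hθ0).integrableOn ((Q_integrable hθ0).smul_const l).integrableOn,
      integral_smul_const, Q_orthant_integral hθ0 k]
  have := (hE.add (tendsto_const_nhds (x := ((2 : ℝ)⁻¹ ^ d) • l))).congr' heq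
  simpa using this

end AuxPoisson

/-- Fejér-type theorem for the Poisson kernel on `ℝ^d`, `d ≥ 2`. -/
theorem poisson_fejer_pi (d : ℕ) (hd : 2 ≤ d)
    (f : (Fin d → ℝ) → ℂ) (hf : MemLp f ⊤ volume)
    (x : Fin d → ℝ) (L : (Fin d → Fin 2) → ℂ)
    (hL : ∀ k : Fin d → Fin 2,
      Tendsto (fun y => f (x - y)) (𝓝[orthant d k] 0) (𝓝 (L k))) :
    Tendsto (fun θ : ℝ => ∫ y, (poissonKernelPi d θ y : ℂ) * f (x - y))
      (𝓝[>] 0) (𝓝 (((2 : ℂ) ^ d)⁻¹ * ∑ k : Fin d → Fin 2, L k)) := by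
  have hd0 : 0 < d := by omega
  have hg : MemLp (fun y => f (x - y)) ⊤ volume :=
    hf.comp_measurePreserving (Measure.measurePreserving_sub_left volume x)
  have hsum := tendsto_finset_sum (f := fun (k : Fin d → Fin 2) (θ : ℝ) =>
      ∫ y in orthant d k, (poissonKernelPi d θ y : ℂ) * f (x - y)) Finset.univ
    (fun k _ => key_orthant hd0 hf x k (hL k))
  have hlim : ∑ k : Fin d → Fin 2, ((2:ℝ)⁻¹ ^ d) • L k
      = ((2:ℂ) ^ d)⁻¹ * ∑ k : Fin d → Fin 2, L k := by
    rw [← Finset.smul_sum, Complex.real_smul]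
    push_cast
    rw [inv_pow]
  rw [hlim] at hsum
  apply Tendsto.congr' _ hsum
  filter_upwards [self_mem_nhdsWithin] with θ hθ0
  rw [Set.mem_Ioi] at hθ0
  have hint : Integrable (fun y => (poissonKernelPi d θ y : ℂ) * f (x - y)) := by
    have h1 : Integrable (fun y => poissonKernelPi d θ y • f (x - y)) :=
      (Q_integrable hθ0).smul_essSup hg.1 (by
        have := hg.2
        rwa [eLpNorm_exponent_top, lt_top_iff_ne_top] at this)
    exact h1.congr (Filter.Eventually.of_forall fun y => by simp [Complex.real_smul])
  exact (integral_orthant_sum _ hint).symm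
end

section
/- Let F be the ax+b group, realized as ℝ_{>0} × ℝ with multiplication (a,b)·(a',b') = (aa', ab'+b), identity (1,0), and left Haar measure dμ = a^{−2} da db, and let Φ_θ (0 < θ < 1) be given by Φ_θ(a,b) = (a²/(πθ³))√(θ² − b²) when 1−θ < a < 1+θ, −θ ≤ b ≤ θ, and 0 otherwise. Set A_1 = (0,1]×(−∞,0], A_2 = (0,1]×(0,∞), A_3 = (1,∞)×(−∞,0], A_4 = (1,∞)×(0,∞). If f ∈ L¹(F) or f ∈ L^∞(F) and x ∈ F are such that for every 1 ≤ j ≤ 4 the limit f(x,A_j) := lim_{y→(1,0), y∈A_j} f(y⁻¹x) exists, then lim_{θ→0⁺} (Φ_θ * f)(x) = (1/4) Σ_{j=1}^4 f(x,A_j). -/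
open MeasureTheory Filter Topology Real

/-- The left Haar measure `a⁻² da db` of the `ax+b` group `F = ℝ_{>0} × ℝ`, realized on the
ambient space `ℝ × ℝ` by extending the density by `0` for `a ≤ 0`. -/
noncomputable def haarAffine : Measure (ℝ × ℝ) :=
  volume.withDensity fun p => if 0 < p.1 then ENNReal.ofReal ((p.1 ^ 2)⁻¹) else 0

/-- In the `ax+b` group with multiplication `(a,b)·(a',b') = (aa', ab'+b)`, the product
`y⁻¹ · x = (x₁/y₁, (x₂ - y₂)/y₁)`. -/
noncomputable def affineInvMul (y x : ℝ × ℝ) : ℝ × ℝ := (x.1 / y.1, (x.2 - y.2) / y.1)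

/-- The kernel `Φ_θ(a,b) = (a²/(πθ³))√(θ² - b²)` for `1-θ < a < 1+θ`, `-θ ≤ b ≤ θ`,
and `0` otherwise. -/
noncomputable def affineKernel (θ : ℝ) (p : ℝ × ℝ) : ℝ :=
  if 1 - θ < p.1 ∧ p.1 < 1 + θ ∧ -θ ≤ p.2 ∧ p.2 ≤ θ then
    p.1 ^ 2 / (π * θ ^ 3) * Real.sqrt (θ ^ 2 - p.2 ^ 2)
  else 0

/-- The local partition `A_1 = (0,1]×(-∞,0]`, `A_2 = (0,1]×(0,∞)`, `A_3 = (1,∞)×(-∞,0]`,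
`A_4 = (1,∞)×(0,∞)` of the `ax+b` group. -/
def affinePartition : Fin 4 → Set (ℝ × ℝ) :=
  ![Set.Ioc 0 1 ×ˢ Set.Iic 0, Set.Ioc 0 1 ×ˢ Set.Ioi 0,
    Set.Ioi 1 ×ˢ Set.Iic 0, Set.Ioi 1 ×ˢ Set.Ioi 0]




noncomputable def wnn : ℝ × ℝ → NNReal := fun p => if 0 < p.1 then ((p.1 ^ 2)⁻¹).toNNReal else 0

theorem wnn_meas : Measurable wnn := by
  refine Measurable.ite (measurableSet_lt measurable_const measurable_fst) ?_ measurable_const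
  exact ((measurable_fst.pow_const 2).inv).real_toNNReal

theorem haarAffine_eq : haarAffine = volume.withDensity (fun p => (wnn p : ENNReal)) := by
  unfold haarAffine wnn
  congr 1
  funext p
  split_ifs with h <;> simp [ENNReal.ofReal]

theorem kernel_meas (θ : ℝ) : Measurable (affineKernel θ) := by
  unfold affineKernel
  refine Measurable.ite ?_ ?_ measurable_const
  · exact ((measurableSet_lt measurable_const measurable_fst).inter
      (((measurableSet_lt measurable_fst measurable_const)).inter
      (((measurableSet_le measurable_const measurable_snd)).inter
      ((measurableSet_le measurable_snd measurable_const)))))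
  · exact ((measurable_fst.pow_const 2).div_const _).mul
      ((measurable_const.sub (measurable_snd.pow_const 2)).sqrt)

theorem kernel_nonneg {θ : ℝ} (hθ : 0 < θ) (y : ℝ × ℝ) : 0 ≤ affineKernel θ y := by
  unfold affineKernel
  split_ifs
  · positivity
  · exact le_refl 0

theorem pointwise_prod {θ : ℝ} (hθ0 : 0 < θ) (hθ1 : θ < 1) {Sa Sb : Set ℝ}
    (hSa : Sa ⊆ Set.Ioi 0) (y : ℝ × ℝ) :
    wnn y • Set.indicator (Sa ×ˢ Sb) (affineKernel θ) y =
      (Set.indicator (Set.Ioo (1-θ) (1+θ) ∩ Sa) (fun _ => (1:ℝ)) y.1) *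
      (Set.indicator (Set.Icc (-θ) θ ∩ Sb) (fun b => (π * θ^3)⁻¹ * Real.sqrt (θ^2 - b^2)) y.2) := by
  by_cases ha : y.1 ∈ Set.Ioo (1-θ) (1+θ) ∩ Sa
  · by_cases hb : y.2 ∈ Set.Icc (-θ) θ ∩ Sb
    · have hy1 : (0:ℝ) < y.1 := hSa ha.2
      have hmem : y ∈ Sa ×ˢ Sb := ⟨ha.2, hb.2⟩
      have hcond : 1 - θ < y.1 ∧ y.1 < 1 + θ ∧ -θ ≤ y.2 ∧ y.2 ≤ θ :=
        ⟨ha.1.1, ha.1.2, hb.1.1, hb.1.2⟩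
      rw [Set.indicator_of_mem hmem, Set.indicator_of_mem ha, Set.indicator_of_mem hb]
      unfold affineKernel wnn
      rw [if_pos hcond, if_pos hy1]
      rw [NNReal.smul_def, smul_eq_mul, Real.coe_toNNReal _ (by positivity)]
      rw [div_eq_mul_inv, one_mul]
      rw [show (y.1^2)⁻¹ * (y.1^2 * (π*θ^3)⁻¹ * Real.sqrt (θ^2 - y.2^2))
        = ((y.1^2)⁻¹ * y.1^2) * ((π*θ^3)⁻¹ * Real.sqrt (θ^2 - y.2^2)) by ring,
        inv_mul_cancel₀ (by positivity), one_mul]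
    · rw [Set.indicator_of_notMem hb, mul_zero]
      by_cases hmem : y ∈ Sa ×ˢ Sb
      · have : affineKernel θ y = 0 := by
          unfold affineKernel
          rw [if_neg]
          intro hcond
          exact hb ⟨⟨hcond.2.2.1, hcond.2.2.2⟩, hmem.2⟩
        rw [Set.indicator_of_mem hmem, this, smul_zero]
      · rw [Set.indicator_of_notMem hmem, smul_zero]
  · rw [Set.indicator_of_notMem ha, zero_mul]
    by_cases hmem : y ∈ Sa ×ˢ Sb
    · have : affineKernel θ y = 0 := by
        unfold affineKernel
        rw [if_neg]
        intro hcond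
        exact ha ⟨⟨hcond.1, hcond.2.1⟩, hmem.1⟩
      rw [Set.indicator_of_mem hmem, this, smul_zero]
    · rw [Set.indicator_of_notMem hmem, smul_zero]

theorem rect_integrable {θ : ℝ} (hθ0 : 0 < θ) (hθ1 : θ < 1) {Sa Sb : Set ℝ}
    (hSam : MeasurableSet Sa) (hSbm : MeasurableSet Sb) (hSa : Sa ⊆ Set.Ioi 0) :
    Integrable (Set.indicator (Sa ×ˢ Sb) (affineKernel θ)) haarAffine := by
  rw [haarAffine_eq, integrable_withDensity_iff_integrable_smul wnn_meas]
  have heq : (fun y : ℝ × ℝ => wnn y • Set.indicator (Sa ×ˢ Sb) (affineKernel θ) y) =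
      fun y : ℝ × ℝ =>
      (Set.indicator (Set.Ioo (1-θ) (1+θ) ∩ Sa) (fun _ => (1:ℝ)) y.1) *
      (Set.indicator (Set.Icc (-θ) θ ∩ Sb) (fun b => (π * θ^3)⁻¹ * Real.sqrt (θ^2 - b^2)) y.2) :=
    funext (pointwise_prod hθ0 hθ1 hSa)
  rw [heq, MeasureTheory.Measure.volume_eq_prod]
  apply Integrable.mul_prod
  · rw [integrable_indicator_iff (measurableSet_Ioo.inter hSam)]
    exact integrableOn_const (lt_top_iff_ne_top.1 (lt_of_le_of_lt
      (measure_mono Set.inter_subset_left) (by rw [Real.volume_Ioo]; exact ENNReal.ofReal_lt_top)))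
  · rw [integrable_indicator_iff (measurableSet_Icc.inter hSbm)]
    exact (((continuous_const.mul ((continuous_const.sub (continuous_pow 2)).sqrt)).integrableOn_Icc
      (μ := volume) (a := -θ) (b := θ))).mono_set Set.inter_subset_left

theorem rect_integral {θ : ℝ} (hθ0 : 0 < θ) (hθ1 : θ < 1) {Sa Sb : Set ℝ}
    (hSam : MeasurableSet Sa) (hSbm : MeasurableSet Sb) (hSa : Sa ⊆ Set.Ioi 0) :
    ∫ y, Set.indicator (Sa ×ˢ Sb) (affineKernel θ) y ∂haarAffine =
      (volume (Set.Ioo (1-θ) (1+θ) ∩ Sa)).toReal *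
      ∫ b in (Set.Icc (-θ) θ ∩ Sb), (π * θ^3)⁻¹ * Real.sqrt (θ^2 - b^2) := by
  rw [haarAffine_eq, integral_withDensity_eq_integral_smul wnn_meas]
  have heq : (fun y : ℝ × ℝ => wnn y • Set.indicator (Sa ×ˢ Sb) (affineKernel θ) y) =
      fun y : ℝ × ℝ =>
      (Set.indicator (Set.Ioo (1-θ) (1+θ) ∩ Sa) (fun _ => (1:ℝ)) y.1) *
      (Set.indicator (Set.Icc (-θ) θ ∩ Sb) (fun b => (π * θ^3)⁻¹ * Real.sqrt (θ^2 - b^2)) y.2) :=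
    funext (pointwise_prod hθ0 hθ1 hSa)
  rw [heq, MeasureTheory.Measure.volume_eq_prod, integral_prod_mul]
  congr 1
  · rw [show (fun _ : ℝ => (1:ℝ)) = (1 : ℝ → ℝ) from rfl,
      integral_indicator_one (measurableSet_Ioo.inter hSam)]
    rfl
  · rw [integral_indicator (measurableSet_Icc.inter hSbm)]

theorem quarter_circle : ∫ u in (0:ℝ)..1, Real.sqrt (1 - u^2) = π/4 := by
  have hc : Continuous fun u : ℝ => Real.sqrt (1 - u^2) :=
    (continuous_const.sub (continuous_pow 2)).sqrt
  have he : ∫ u in (-1:ℝ)..0, Real.sqrt (1 - u^2) = ∫ u in (0:ℝ)..1, Real.sqrt (1 - u^2) := by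
    have := intervalIntegral.integral_comp_neg (a := (0:ℝ)) (b := 1) (fun u => Real.sqrt (1 - u^2))
    simpa using this.symm
  have hs := intervalIntegral.integral_add_adjacent_intervals
    (μ := volume) (a := (-1:ℝ)) (b := 0) (c := 1) (f := fun u => Real.sqrt (1 - u^2))
    (hc.intervalIntegrable _ _) (hc.intervalIntegrable _ _)
  have := integral_sqrt_one_sub_sq
  linarith [hs, he, this]

theorem sqrt_right {θ : ℝ} (hθ : 0 < θ) :
    ∫ b in (0:ℝ)..θ, Real.sqrt (θ^2 - b^2) = π * θ^2 / 4 := by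
  have hθ' : θ ≠ 0 := ne_of_gt hθ
  have key : ∀ b : ℝ, Real.sqrt (θ^2 - b^2) = θ * Real.sqrt (1 - (b * θ⁻¹)^2) := by
    intro b
    rw [show θ * Real.sqrt (1 - (b * θ⁻¹)^2) = Real.sqrt (θ^2) * Real.sqrt (1 - (b*θ⁻¹)^2) by
      rw [Real.sqrt_sq hθ.le],
      ← Real.sqrt_mul (sq_nonneg θ)]
    congr 1
    field_simp
  simp_rw [key]
  rw [intervalIntegral.integral_const_mul]
  have := intervalIntegral.mul_integral_comp_mul_right (a := (0:ℝ)) (b := θ) (c := θ⁻¹)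
    (f := fun u => Real.sqrt (1 - u^2))
  rw [show (0:ℝ) * θ⁻¹ = 0 by ring, show θ * θ⁻¹ = 1 by field_simp, quarter_circle] at this
  -- this : θ⁻¹ * ∫ x in 0..θ, √(1 - (x*θ⁻¹)^2) = π/4
  have h2 : ∫ x in (0:ℝ)..θ, Real.sqrt (1 - (x*θ⁻¹)^2) = θ * (π/4) := by
    field_simp at this ⊢
    linarith
  rw [h2]; ring

theorem sqrt_left {θ : ℝ} (hθ : 0 < θ) :
    ∫ b in (-θ:ℝ)..0, Real.sqrt (θ^2 - b^2) = π * θ^2 / 4 := by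
  have he : ∫ b in (-θ:ℝ)..0, Real.sqrt (θ^2 - b^2) = ∫ b in (0:ℝ)..θ, Real.sqrt (θ^2 - b^2) := by
    have := intervalIntegral.integral_comp_neg (a := (0:ℝ)) (b := θ) (fun b => Real.sqrt (θ^2 - b^2))
    simpa using this.symm
  rw [he, sqrt_right hθ]


theorem inter_a1 {θ : ℝ} (hθ0 : 0 < θ) (hθ1 : θ < 1) :
    Set.Ioo (1-θ) (1+θ) ∩ Set.Ioc 0 1 = Set.Ioc (1-θ) 1 := by
  ext z
  simp only [Set.mem_inter_iff, Set.mem_Ioo, Set.mem_Ioc]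
  constructor
  · rintro ⟨⟨h1, h2⟩, h3, h4⟩; exact ⟨h1, h4⟩
  · rintro ⟨h1, h2⟩; exact ⟨⟨h1, by linarith⟩, by linarith, h2⟩

theorem inter_a2 {θ : ℝ} (hθ0 : 0 < θ) (hθ1 : θ < 1) :
    Set.Ioo (1-θ) (1+θ) ∩ Set.Ioi 1 = Set.Ioo 1 (1+θ) := by
  ext z
  simp only [Set.mem_inter_iff, Set.mem_Ioo, Set.mem_Ioi]
  constructor
  · rintro ⟨⟨h1, h2⟩, h3⟩; exact ⟨h3, h2⟩
  · rintro ⟨h1, h2⟩; exact ⟨⟨by linarith, h2⟩, h1⟩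

theorem inter_b1 {θ : ℝ} (hθ0 : 0 < θ) : Set.Icc (-θ) θ ∩ Set.Iic 0 = Set.Icc (-θ) 0 := by
  ext z
  simp only [Set.mem_inter_iff, Set.mem_Icc, Set.mem_Iic]
  constructor
  · rintro ⟨⟨h1, h2⟩, h3⟩; exact ⟨h1, h3⟩
  · rintro ⟨h1, h2⟩; exact ⟨⟨h1, by linarith⟩, h2⟩

theorem inter_b2 {θ : ℝ} (hθ0 : 0 < θ) : Set.Icc (-θ) θ ∩ Set.Ioi 0 = Set.Ioc 0 θ := by
  ext z
  simp only [Set.mem_inter_iff, Set.mem_Icc, Set.mem_Ioi, Set.mem_Ioc]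
  constructor
  · rintro ⟨⟨h1, h2⟩, h3⟩; exact ⟨h3, h2⟩
  · rintro ⟨h1, h2⟩; exact ⟨⟨by linarith, h2⟩, h1⟩

theorem int_b1 {θ : ℝ} (hθ0 : 0 < θ) :
    ∫ b in Set.Icc (-θ) 0, (π * θ^3)⁻¹ * Real.sqrt (θ^2 - b^2) = (4*θ)⁻¹ := by
  rw [MeasureTheory.integral_Icc_eq_integral_Ioc,
    ← intervalIntegral.integral_of_le (by linarith : (-θ:ℝ) ≤ 0),
    intervalIntegral.integral_const_mul, sqrt_left hθ0]
  have hπ := Real.pi_ne_zero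
  field_simp

theorem int_b2 {θ : ℝ} (hθ0 : 0 < θ) :
    ∫ b in Set.Ioc 0 θ, (π * θ^3)⁻¹ * Real.sqrt (θ^2 - b^2) = (4*θ)⁻¹ := by
  rw [← intervalIntegral.integral_of_le (by linarith : (0:ℝ) ≤ θ),
    intervalIntegral.integral_const_mul, sqrt_right hθ0]
  have hπ := Real.pi_ne_zero
  field_simp

theorem partition_integral {θ : ℝ} (hθ0 : 0 < θ) (hθ1 : θ < 1) (j : Fin 4) :
    ∫ y, Set.indicator (affinePartition j) (affineKernel θ) y ∂haarAffine = 1/4 := by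
  have hθ' : θ ≠ 0 := ne_of_gt hθ0
  fin_cases j
  · show ∫ y, Set.indicator (Set.Ioc 0 1 ×ˢ Set.Iic 0) (affineKernel θ) y ∂haarAffine = 1/4
    rw [
      rect_integral hθ0 hθ1 measurableSet_Ioc measurableSet_Iic Set.Ioc_subset_Ioi_self,
      inter_a1 hθ0 hθ1, inter_b1 hθ0, int_b1 hθ0, Real.volume_Ioc,
      show (1 : ℝ) - (1 - θ) = θ by ring, ENNReal.toReal_ofReal hθ0.le]
    field_simp
  · show ∫ y, Set.indicator (Set.Ioc 0 1 ×ˢ Set.Ioi 0) (affineKernel θ) y ∂haarAffine = 1/4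
    rw [
      rect_integral hθ0 hθ1 measurableSet_Ioc measurableSet_Ioi Set.Ioc_subset_Ioi_self,
      inter_a1 hθ0 hθ1, inter_b2 hθ0, int_b2 hθ0, Real.volume_Ioc,
      show (1 : ℝ) - (1 - θ) = θ by ring, ENNReal.toReal_ofReal hθ0.le]
    field_simp
  · show ∫ y, Set.indicator (Set.Ioi 1 ×ˢ Set.Iic 0) (affineKernel θ) y ∂haarAffine = 1/4
    rw [
      rect_integral hθ0 hθ1 measurableSet_Ioi measurableSet_Iic
        (fun z hz => Set.mem_Ioi.2 (lt_trans one_pos (Set.mem_Ioi.1 hz))),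
      inter_a2 hθ0 hθ1, inter_b1 hθ0, int_b1 hθ0, Real.volume_Ioo,
      show (1 : ℝ) + θ - 1 = θ by ring, ENNReal.toReal_ofReal hθ0.le]
    field_simp
  · show ∫ y, Set.indicator (Set.Ioi 1 ×ˢ Set.Ioi 0) (affineKernel θ) y ∂haarAffine = 1/4
    rw [
      rect_integral hθ0 hθ1 measurableSet_Ioi measurableSet_Ioi
        (fun z hz => Set.mem_Ioi.2 (lt_trans one_pos (Set.mem_Ioi.1 hz))),
      inter_a2 hθ0 hθ1, inter_b2 hθ0, int_b2 hθ0, Real.volume_Ioo,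
      show (1 : ℝ) + θ - 1 = θ by ring, ENNReal.toReal_ofReal hθ0.le]
    field_simp

theorem kernel_eq_sum {θ : ℝ} (hθ1 : θ < 1) (y : ℝ × ℝ) :
    affineKernel θ y = ∑ j, Set.indicator (affinePartition j) (affineKernel θ) y := by
  by_cases hy : 0 < y.1
  · rcases le_or_gt y.1 1 with h1 | h1 <;> rcases le_or_gt y.2 0 with h2 | h2
    · simp [Fin.sum_univ_four, affinePartition, Set.indicator_apply, Set.mem_prod,
        Set.mem_Ioc, Set.mem_Iic, Set.mem_Ioi, hy, h1, h2, not_lt.2 h1, not_lt.2 h2]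
    · simp [Fin.sum_univ_four, affinePartition, Set.indicator_apply, Set.mem_prod,
        Set.mem_Ioc, Set.mem_Iic, Set.mem_Ioi, hy, h1, not_lt.2 h1, h2, not_le.2 h2]
    · simp [Fin.sum_univ_four, affinePartition, Set.indicator_apply, Set.mem_prod,
        Set.mem_Ioc, Set.mem_Iic, Set.mem_Ioi, hy, h1, not_le.2 h1, h2, not_lt.2 h2]
    · simp [Fin.sum_univ_four, affinePartition, Set.indicator_apply, Set.mem_prod,
        Set.mem_Ioc, Set.mem_Iic, Set.mem_Ioi, hy, h1, not_le.2 h1, h2, not_le.2 h2]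
  · have hK : affineKernel θ y = 0 := by
      unfold affineKernel
      rw [if_neg]
      rintro ⟨hc, -⟩
      exact hy (by linarith)
    rw [hK]
    symm
    apply Finset.sum_eq_zero
    intro j _
    apply Set.indicator_of_notMem
    fin_cases j
    · exact fun hmem => hy hmem.1.1
    · exact fun hmem => hy hmem.1.1
    · exact fun hmem => hy (lt_trans one_pos hmem.1)
    · exact fun hmem => hy (lt_trans one_pos hmem.1)

theorem partition_integrable {θ : ℝ} (hθ0 : 0 < θ) (hθ1 : θ < 1) (j : Fin 4) :
    Integrable (Set.indicator (affinePartition j) (affineKernel θ)) haarAffine := by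
  fin_cases j
  · exact rect_integrable hθ0 hθ1 measurableSet_Ioc measurableSet_Iic Set.Ioc_subset_Ioi_self
  · exact rect_integrable hθ0 hθ1 measurableSet_Ioc measurableSet_Ioi Set.Ioc_subset_Ioi_self
  · exact rect_integrable hθ0 hθ1 measurableSet_Ioi measurableSet_Iic
      (fun z hz => Set.mem_Ioi.2 (lt_trans one_pos (Set.mem_Ioi.1 hz)))
  · exact rect_integrable hθ0 hθ1 measurableSet_Ioi measurableSet_Ioi
      (fun z hz => Set.mem_Ioi.2 (lt_trans one_pos (Set.mem_Ioi.1 hz)))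

theorem kernel_integrable {θ : ℝ} (hθ0 : 0 < θ) (hθ1 : θ < 1) :
    Integrable (affineKernel θ) haarAffine := by
  have heq : affineKernel θ = fun y => ∑ j, Set.indicator (affinePartition j) (affineKernel θ) y :=
    funext (kernel_eq_sum hθ1)
  rw [heq]
  exact integrable_finset_sum _ (fun j _ => partition_integrable hθ0 hθ1 j)

theorem kernel_total {θ : ℝ} (hθ0 : 0 < θ) (hθ1 : θ < 1) :
    ∫ y, affineKernel θ y ∂haarAffine = 1 := by
  have heq : affineKernel θ = fun y => ∑ j, Set.indicator (affinePartition j) (affineKernel θ) y :=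
    funext (kernel_eq_sum hθ1)
  rw [heq, integral_finset_sum _ (fun j _ => partition_integrable hθ0 hθ1 j)]
  simp only [partition_integral hθ0 hθ1]
  norm_num


noncomputable def wden : ℝ × ℝ → ENNReal :=
  fun p => if 0 < p.1 then ENNReal.ofReal ((p.1 ^ 2)⁻¹) else 0

theorem wden_meas : Measurable wden := by
  refine Measurable.ite (measurableSet_lt measurable_const measurable_fst) ?_ measurable_const
  exact ((measurable_fst.pow_const 2).inv).ennreal_ofReal

theorem haarAffine_eq' : haarAffine = volume.withDensity wden := rfl

theorem measurableSet_P : MeasurableSet {p : ℝ × ℝ | 0 < p.1} :=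
  measurableSet_lt measurable_const measurable_fst

theorem haar_null_of {S : Set (ℝ × ℝ)} (h : volume (S ∩ {p : ℝ × ℝ | 0 < p.1}) = 0) :
    haarAffine S = 0 := by
  set P := {p : ℝ × ℝ | 0 < p.1}
  have h1 : haarAffine (S ∩ P) = 0 := by
    obtain ⟨U, hsub, hUm, hU0⟩ := exists_measurable_superset_of_null h
    have : haarAffine U = 0 := by
      rw [haarAffine_eq', withDensity_apply _ hUm, setLIntegral_measure_zero _ _ hU0]
    exact measure_mono_null hsub this
  have h2 : haarAffine (S ∩ Pᶜ) = 0 := by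
    have hz : haarAffine Pᶜ = 0 := by
      rw [haarAffine_eq', withDensity_apply _ measurableSet_P.compl]
      have h0fun : ∀ y : ℝ × ℝ, y ∈ Pᶜ → wden y = (fun _ : ℝ × ℝ => (0:ENNReal)) y :=
        fun y hy => if_neg hy
      rw [setLIntegral_congr_fun (g := fun _ : ℝ × ℝ => (0:ENNReal)) measurableSet_P.compl
        h0fun]
      exact lintegral_zero
    exact measure_mono_null Set.inter_subset_right hz
  have := measure_union_le (μ := haarAffine) (S ∩ P) (S ∩ Pᶜ)
  rw [Set.inter_union_compl, h1, h2] at this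
  simpa using this

theorem haar_null_to {S : Set (ℝ × ℝ)} (hS : MeasurableSet S) (h : haarAffine S = 0) :
    volume (S ∩ {p : ℝ × ℝ | 0 < p.1}) = 0 := by
  rw [haarAffine_eq', withDensity_apply _ hS] at h
  have hae : wden =ᵐ[volume.restrict S] 0 := (lintegral_eq_zero_iff wden_meas).1 h
  have hset : {y : ℝ × ℝ | ¬ wden y = 0} = {p : ℝ × ℝ | 0 < p.1} := by
    ext y
    simp only [Set.mem_setOf_eq, wden]
    constructor
    · intro hy
      by_contra hc
      exact hy (if_neg hc)
    · intro hy
      rw [if_pos hy]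
      simp only [ne_eq, ENNReal.ofReal_eq_zero, not_le]
      positivity
  have h2 : (volume.restrict S) {a : ℝ × ℝ | ¬ wden a = 0} = 0 := by
    have := hae
    rw [Filter.EventuallyEq, ae_iff] at this
    simpa using this
  rw [hset] at h2
  rw [Measure.restrict_apply measurableSet_P] at h2
  rwa [Set.inter_comm] at h2

theorem invMul_meas (x : ℝ × ℝ) : Measurable (fun y => affineInvMul y x) :=
  (measurable_const.div measurable_fst).prod
    ((measurable_const.sub measurable_snd).div measurable_fst)

theorem invMul_qmp (x : ℝ × ℝ) (hx : 0 < x.1) :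
    Measure.QuasiMeasurePreserving (fun y => affineInvMul y x) haarAffine haarAffine := by
  refine ⟨invMul_meas x, Measure.AbsolutelyContinuous.mk ?_⟩
  intro S hS h0
  rw [Measure.map_apply (invMul_meas x) hS]
  apply haar_null_of
  set P := {p : ℝ × ℝ | 0 < p.1}
  set ρ : ℝ × ℝ → ℝ × ℝ := fun z => (x.1 / z.1, x.2 - x.1 * z.2 / z.1) with hρ
  have hSP : volume (S ∩ P) = 0 := haar_null_to hS h0
  have himage : (fun y => affineInvMul y x) ⁻¹' S ∩ P ⊆ ρ '' (S ∩ P) := by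
    rintro y ⟨hyS, hyP⟩
    have hy1 : (0:ℝ) < y.1 := hyP
    refine ⟨affineInvMul y x, ⟨hyS, div_pos hx hy1⟩, ?_⟩
    have hx1 : x.1 ≠ 0 := ne_of_gt hx
    have hy1' : y.1 ≠ 0 := ne_of_gt hy1
    unfold affineInvMul
    rw [hρ]
    refine Prod.ext ?_ ?_
    · show x.1 / (x.1 / y.1) = y.1
      field_simp
    · show x.2 - x.1 * ((x.2 - y.2) / y.1) / (x.1 / y.1) = y.2
      field_simp
      ring
  have hdiff : DifferentiableOn ℝ ρ (S ∩ P) := by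
    intro z hz
    have hz1 : z.1 ≠ 0 := ne_of_gt hz.2
    apply DifferentiableAt.differentiableWithinAt
    show DifferentiableAt ℝ (fun z : ℝ × ℝ => (x.1 / z.1, x.2 - x.1 * z.2 / z.1)) z
    have h1 : DifferentiableAt ℝ (fun z : ℝ × ℝ => z.1) z := differentiableAt_fst
    have h2 : DifferentiableAt ℝ (fun z : ℝ × ℝ => z.2) z := differentiableAt_snd
    have hinv : DifferentiableAt ℝ (fun z : ℝ × ℝ => (z.1)⁻¹) z := h1.inv hz1
    simp only [div_eq_mul_inv]
    exact ((differentiableAt_const x.1).mul hinv).prodMk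
      ((differentiableAt_const x.2).sub (((differentiableAt_const x.1).mul h2).mul hinv))
  exact measure_mono_null himage
    (addHaar_image_eq_zero_of_differentiableOn_of_addHaar_eq_zero (μ := volume) hdiff hSP)

theorem comp_aesm {f : ℝ × ℝ → ℂ} (hfm : AEStronglyMeasurable f haarAffine) (x : ℝ × ℝ)
    (hx : 0 < x.1) : AEStronglyMeasurable (fun y => f (affineInvMul y x)) haarAffine :=
  hfm.comp_quasiMeasurePreserving (invMul_qmp x hx)

noncomputable def affineEll (L : Fin 4 → ℂ) (y : ℝ × ℝ) : ℂ :=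
  if y.1 ≤ 1 then (if y.2 ≤ 0 then L 0 else L 1) else (if y.2 ≤ 0 then L 2 else L 3)

theorem ell_meas (L : Fin 4 → ℂ) : Measurable (affineEll L) := by
  unfold affineEll
  exact Measurable.ite (measurableSet_le measurable_fst measurable_const)
    (Measurable.ite (measurableSet_le measurable_snd measurable_const)
      measurable_const measurable_const)
    (Measurable.ite (measurableSet_le measurable_snd measurable_const)
      measurable_const measurable_const)

theorem ell_mem (L : Fin 4 → ℂ) (y : ℝ × ℝ) (hy : 0 < y.1) :
    ∃ j, y ∈ affinePartition j ∧ affineEll L y = L j := by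
  rcases le_or_gt y.1 1 with h1 | h1 <;> rcases le_or_gt y.2 0 with h2 | h2
  · exact ⟨0, ⟨⟨hy, h1⟩, h2⟩, by simp [affineEll, h1, h2]⟩
  · exact ⟨1, ⟨⟨hy, h1⟩, h2⟩, by simp [affineEll, h1, not_le.2 h2]⟩
  · exact ⟨2, ⟨h1, h2⟩, by simp [affineEll, not_le.2 h1, h2]⟩
  · exact ⟨3, ⟨h1, h2⟩, by simp [affineEll, not_le.2 h1, not_le.2 h2]⟩

theorem kernel_ne_zero {θ : ℝ} {y : ℝ × ℝ} (h : affineKernel θ y ≠ 0) :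
    1 - θ < y.1 ∧ y.1 < 1 + θ ∧ -θ ≤ y.2 ∧ y.2 ≤ θ := by
  by_contra hc
  exact h (if_neg hc)

theorem kernel_ell_eq_sum {θ : ℝ} (hθ1 : θ < 1) (L : Fin 4 → ℂ) (y : ℝ × ℝ) :
    (affineKernel θ y : ℂ) * affineEll L y =
      ∑ j, (↑(Set.indicator (affinePartition j) (affineKernel θ) y) : ℂ) * L j := by
  by_cases hy : 0 < y.1
  · rcases le_or_gt y.1 1 with h1 | h1 <;> rcases le_or_gt y.2 0 with h2 | h2
    · simp [affineEll, Fin.sum_univ_four, affinePartition, Set.indicator_apply, Set.mem_prod,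
        Set.mem_Ioc, Set.mem_Iic, Set.mem_Ioi, hy, h1, h2, not_lt.2 h1, not_lt.2 h2]
    · simp [affineEll, Fin.sum_univ_four, affinePartition, Set.indicator_apply, Set.mem_prod,
        Set.mem_Ioc, Set.mem_Iic, Set.mem_Ioi, hy, h1, not_lt.2 h1, h2, not_le.2 h2]
    · simp [affineEll, Fin.sum_univ_four, affinePartition, Set.indicator_apply, Set.mem_prod,
        Set.mem_Ioc, Set.mem_Iic, Set.mem_Ioi, hy, h1, not_le.2 h1, h2, not_lt.2 h2]
    · simp [affineEll, Fin.sum_univ_four, affinePartition, Set.indicator_apply, Set.mem_prod,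
        Set.mem_Ioc, Set.mem_Iic, Set.mem_Ioi, hy, h1, not_le.2 h1, h2, not_le.2 h2]
  · have hK : affineKernel θ y = 0 := by
      unfold affineKernel
      rw [if_neg]
      rintro ⟨hc, -⟩
      exact hy (by linarith)
    have h0 : ∀ j : Fin 4, Set.indicator (affinePartition j) (affineKernel θ) y = 0 := by
      intro j
      apply Set.indicator_of_notMem
      fin_cases j
      · exact fun hmem => hy hmem.1.1
      · exact fun hmem => hy hmem.1.1
      · exact fun hmem => hy (lt_trans one_pos hmem.1)
      · exact fun hmem => hy (lt_trans one_pos hmem.1)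
    simp [hK, h0]

theorem ell_integrable {θ : ℝ} (hθ0 : 0 < θ) (hθ1 : θ < 1) (L : Fin 4 → ℂ) :
    Integrable (fun y => (affineKernel θ y : ℂ) * affineEll L y) haarAffine := by
  have heq : (fun y => (affineKernel θ y : ℂ) * affineEll L y) =
      fun y => ∑ j, (↑(Set.indicator (affinePartition j) (affineKernel θ) y) : ℂ) * L j :=
    funext (kernel_ell_eq_sum hθ1 L)
  rw [heq]
  exact integrable_finset_sum _
    (fun j _ => ((partition_integrable hθ0 hθ1 j).ofReal).mul_const _)

theorem ell_integral {θ : ℝ} (hθ0 : 0 < θ) (hθ1 : θ < 1) (L : Fin 4 → ℂ) :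
    ∫ y, (affineKernel θ y : ℂ) * affineEll L y ∂haarAffine = (1/4 : ℂ) * ∑ j, L j := by
  have heq : (fun y => (affineKernel θ y : ℂ) * affineEll L y) =
      fun y => ∑ j, (↑(Set.indicator (affinePartition j) (affineKernel θ) y) : ℂ) * L j :=
    funext (kernel_ell_eq_sum hθ1 L)
  have hswap := integral_finset_sum (μ := haarAffine) Finset.univ
    (f := fun (j : Fin 4) (y : ℝ × ℝ) =>
      (↑(Set.indicator (affinePartition j) (affineKernel θ) y) : ℂ) * L j)
    (fun j _ => ((partition_integrable hθ0 hθ1 j).ofReal).mul_const _)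
  rw [heq, hswap]
  have hval : ∀ j : Fin 4,
      ∫ y, (↑(Set.indicator (affinePartition j) (affineKernel θ) y) : ℂ) * L j ∂haarAffine
        = (1/4 : ℂ) * L j := by
    intro j
    have hor : ∫ y, (↑(Set.indicator (affinePartition j) (affineKernel θ) y) : ℂ) ∂haarAffine
        = ((∫ y, Set.indicator (affinePartition j) (affineKernel θ) y ∂haarAffine : ℝ) : ℂ) :=
      integral_ofReal
    rw [integral_mul_const, hor, partition_integral hθ0 hθ1 j]
    norm_num
  simp only [hval]
  rw [← Finset.mul_sum]


/-- Fejér-type theorem for the `ax+b` group `F`: if `f ∈ L¹(F)` or `f ∈ L^∞(F)` and, at a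
point `x` of `F`, each limit `f(x, A_j) = lim_{y→(1,0), y ∈ A_j} f(y⁻¹x)` exists, then
`(Φ_θ * f)(x) → (1/4) ∑_{j=1}^4 f(x, A_j)` as `θ → 0⁺`. -/
theorem affine_fejer (f : ℝ × ℝ → ℂ)
    (hf : Integrable f haarAffine ∨ MemLp f ⊤ haarAffine)
    (x : ℝ × ℝ) (hx : 0 < x.1) (L : Fin 4 → ℂ)
    (hL : ∀ j : Fin 4, Tendsto (fun y => f (affineInvMul y x))
      (𝓝[affinePartition j] ((1 : ℝ), (0 : ℝ))) (𝓝 (L j))) :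
    Tendsto (fun θ : ℝ => ∫ y, (affineKernel θ y : ℂ) * f (affineInvMul y x) ∂haarAffine)
      (𝓝[>] 0) (𝓝 ((1/4) * ∑ j, L j)) := by
  have hfa : AEStronglyMeasurable f haarAffine := by
    rcases hf with h | h
    · exact h.aestronglyMeasurable
    · exact h.aestronglyMeasurable
  have hgm : AEStronglyMeasurable (fun y => f (affineInvMul y x)) haarAffine := comp_aesm hfa x hx
  rw [Metric.tendsto_nhdsWithin_nhds]
  intro ε hε
  choose δ hδpos hδ using fun j : Fin 4 =>
    Metric.tendsto_nhdsWithin_nhds.1 (hL j) (ε/2) (by positivity)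
  refine ⟨min (min (min (δ 0) (δ 1)) (min (δ 2) (δ 3))) 1,
    lt_min (lt_min (lt_min (hδpos 0) (hδpos 1)) (lt_min (hδpos 2) (hδpos 3))) one_pos, ?_⟩
  intro θ hθmem hθd
  have hθ0 : 0 < θ := hθmem
  rw [Real.dist_eq, sub_zero, abs_of_pos hθ0] at hθd
  have hθ1 : θ < 1 := lt_of_lt_of_le hθd (min_le_right _ _)
  have hθδ : ∀ j : Fin 4, θ < δ j := by
    intro j
    have h' := lt_of_lt_of_le hθd (min_le_left _ _)
    fin_cases j
    · exact lt_of_lt_of_le h' ((min_le_left _ _).trans (min_le_left _ _))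
    · exact lt_of_lt_of_le h' ((min_le_left _ _).trans (min_le_right _ _))
    · exact lt_of_lt_of_le h' ((min_le_right _ _).trans (min_le_left _ _))
    · exact lt_of_lt_of_le h' ((min_le_right _ _).trans (min_le_right _ _))
  set g := fun y => f (affineInvMul y x) with hg
  have hbound : ∀ y : ℝ × ℝ,
      ‖(affineKernel θ y : ℂ) * (g y - affineEll L y)‖ ≤ (ε/2) * affineKernel θ y := by
    intro y
    by_cases hK : affineKernel θ y = 0
    · rw [hK]; simp
    · obtain ⟨hb1, hb2, hb3, hb4⟩ := kernel_ne_zero hK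
      have hy1 : 0 < y.1 := by linarith
      obtain ⟨j, hyj, hEq⟩ := ell_mem L y hy1
      have hdist : dist y ((1:ℝ), (0:ℝ)) < δ j := by
        rw [Prod.dist_eq]
        have hj := hθδ j
        apply max_lt
        · show dist y.1 1 < δ j
          rw [Real.dist_eq, abs_lt]
          constructor <;> linarith
        · show dist y.2 0 < δ j
          rw [Real.dist_eq, sub_zero, abs_lt]
          constructor <;> linarith
      have hd : dist (g y) (L j) < ε/2 := hδ j hyj hdist
      have hKnn := kernel_nonneg hθ0 y
      calc ‖(affineKernel θ y : ℂ) * (g y - affineEll L y)‖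
          = |affineKernel θ y| * ‖g y - affineEll L y‖ := by
            rw [norm_mul, Complex.norm_real, Real.norm_eq_abs]
        _ = affineKernel θ y * ‖g y - affineEll L y‖ := by rw [abs_of_nonneg hKnn]
        _ ≤ affineKernel θ y * (ε/2) := by
            apply mul_le_mul_of_nonneg_left _ hKnn
            rw [hEq, ← dist_eq_norm]
            exact le_of_lt hd
        _ = (ε/2) * affineKernel θ y := mul_comm _ _
  have hKc : AEStronglyMeasurable (fun y => (affineKernel θ y : ℂ)) haarAffine :=
    (Complex.measurable_ofReal.comp (kernel_meas θ)).aestronglyMeasurable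
  have hdom : Integrable (fun y => (ε/2) * affineKernel θ y) haarAffine :=
    (kernel_integrable hθ0 hθ1).const_mul _
  have hdiffint : Integrable (fun y => (affineKernel θ y : ℂ) * (g y - affineEll L y))
      haarAffine := by
    apply Integrable.mono' hdom (hKc.mul (hgm.sub (ell_meas L).aestronglyMeasurable))
    exact ae_of_all _ hbound
  have hellint := ell_integrable hθ0 hθ1 L
  have hsplit : (fun y => (affineKernel θ y : ℂ) * g y)
      = fun y => (affineKernel θ y : ℂ) * affineEll L y
        + (affineKernel θ y : ℂ) * (g y - affineEll L y) := by
    funext y; ring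
  have hIg : ∫ y, (affineKernel θ y : ℂ) * g y ∂haarAffine
      = (1/4 : ℂ) * ∑ j, L j
        + ∫ y, (affineKernel θ y : ℂ) * (g y - affineEll L y) ∂haarAffine := by
    rw [hsplit, integral_add hellint hdiffint, ell_integral hθ0 hθ1 L]
  rw [dist_eq_norm, hIg, add_sub_cancel_left]
  calc ‖∫ y, (affineKernel θ y : ℂ) * (g y - affineEll L y) ∂haarAffine‖
      ≤ ∫ y, (ε/2) * affineKernel θ y ∂haarAffine :=
        norm_integral_le_of_norm_le hdom (ae_of_all _ hbound)
    _ = ε/2 := by rw [integral_const_mul, kernel_total hθ0 hθ1, mul_one]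
    _ < ε := by linarith
end
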